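/- Let (A, f) be a partial injection structure and a ∈ A. Then the orbit of a is exactly one of: a k-cycle (for some k ≥ 1), a finite k-chain (for some k ≥ 1), a Z-chain, an ω-chain, or an ω*-chain. -/

import Mathlib

/-- `n`-fold iteration of a partial function. -/
def pIter {A : Type*} (f : A →. A) : ℕ → A →. A
  | 0 => fun a => Part.some a
  | n + 1 => fun a => (pIter f n a).bind f

/-- The orbit of `a` under a partial function `f`. -/
def pOrbit {A : Type*} (f : A →. A) (a : A) : Set A :=
  {b | ∃ n : ℕ, b ∈ pIter f n a ∨ a ∈ pIter f n b}

/-- The range of a partial function. -/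
def pRan {A : Type*} (f : A →. A) : Set A := {y | ∃ x, y ∈ f x}

/-- `S` is a `k`-cycle: `S = {x, f(x), …, f^{k-1}(x)}` with `f^k(x) = x` and
these `k` elements pairwise distinct. -/
def IsKCycle {A : Type*} (f : A →. A) (k : ℕ) (S : Set A) : Prop :=
  1 ≤ k ∧ ∃ x ∈ S, x ∈ pIter f k x ∧
    (∀ i j, i < j → j < k → ∀ y z, y ∈ pIter f i x → z ∈ pIter f j x → y ≠ z) ∧
    S = {y | ∃ i < k, y ∈ pIter f i x}

/-- `S` is a finite `k`-chain: distinct `x₁, …, x_k` with `x₁ ∉ ran f`,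
`x_{i+1} = f(x_i)` and `x_k ∉ dom f`. -/
def IsKChain {A : Type*} (f : A →. A) (k : ℕ) (S : Set A) : Prop :=
  1 ≤ k ∧ ∃ x : Fin k → A, Function.Injective x ∧ S = Set.range x ∧
    (∀ hk : 0 < k, x ⟨0, hk⟩ ∉ pRan f) ∧
    (∀ i : Fin k, ∀ h : i.val + 1 < k, x ⟨i.val + 1, h⟩ ∈ f (x i)) ∧
    (∀ hk : 0 < k, ¬(f (x ⟨k - 1, by omega⟩)).Dom)

/-- `S` is a `Z`-chain: infinite, indexed bijectively by ℤ with `f` acting as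
successor (so `f` restricts to a bijection of `S` with no periodic point). -/
def IsZChain {A : Type*} (f : A →. A) (S : Set A) : Prop :=
  S.Infinite ∧ ∃ e : ℤ → A, Function.Injective e ∧ Set.range e = S ∧
    ∀ z : ℤ, e (z + 1) ∈ f (e z)

/-- `S` is an ω-chain: `S = {x₀, x₁, …}` with all `xᵢ` distinct,
`x₀ ∉ ran f` and `x_{i+1} = f(x_i)`. -/
def IsOmegaChain {A : Type*} (f : A →. A) (S : Set A) : Prop :=
  ∃ u : ℕ → A, Function.Injective u ∧ S = Set.range u ∧
    u 0 ∉ pRan f ∧ ∀ n : ℕ, u (n + 1) ∈ f (u n)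

/-- `S` is an ω*-chain: `S = {x₀, x₁, …}` with all `xᵢ` distinct,
`x₀ ∉ dom f` and `f(x_{i+1}) = x_i`. -/
def IsOmegaStarChain {A : Type*} (f : A →. A) (S : Set A) : Prop :=
  ∃ u : ℕ → A, Function.Injective u ∧ S = Set.range u ∧
    ¬(f (u 0)).Dom ∧ ∀ n : ℕ, u n ∈ f (u (n + 1))

section Lemmas
variable {A : Type*} {f : A →. A}

theorem pIter_zero_iff {a b : A} : b ∈ pIter f 0 a ↔ b = a := by
  simp [pIter]

theorem pIter_succ_iff {n : ℕ} {a b : A} :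
    b ∈ pIter f (n + 1) a ↔ ∃ c, c ∈ pIter f n a ∧ b ∈ f c := by
  simp [pIter, Part.mem_bind_iff]
  exact ⟨fun h => Part.mem_bind_iff.1 h, fun h => Part.mem_bind_iff.2 h⟩

theorem pIter_one_iff {a b : A} : b ∈ pIter f 1 a ↔ b ∈ f a := by
  simp [pIter_succ_iff, pIter_zero_iff]

theorem pIter_add {m n : ℕ} {a b : A} :
    b ∈ pIter f (m + n) a ↔ ∃ c, c ∈ pIter f m a ∧ b ∈ pIter f n c := by
  induction n generalizing b with
  | zero => simp [pIter_zero_iff]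
  | succ n ih =>
    constructor
    · intro h
      rw [show m + (n+1) = (m+n) + 1 by omega, pIter_succ_iff] at h
      obtain ⟨c, hc, hb⟩ := h
      obtain ⟨d, hd, hcd⟩ := ih.1 hc
      exact ⟨d, hd, pIter_succ_iff.2 ⟨c, hcd, hb⟩⟩
    · rintro ⟨c, hc, hb⟩
      rw [pIter_succ_iff] at hb
      obtain ⟨d, hd, hbd⟩ := hb
      rw [show m + (n+1) = (m+n) + 1 by omega, pIter_succ_iff]
      exact ⟨d, ih.2 ⟨c, hc, hd⟩, hbd⟩

variable (hinj : ∀ x y z : A, z ∈ f x → z ∈ f y → x = y)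
include hinj

theorem pIter_back_inj {n : ℕ} {x y b : A} (hx : b ∈ pIter f n x)
    (hy : b ∈ pIter f n y) : x = y := by
  induction n generalizing b with
  | zero => rw [pIter_zero_iff] at hx hy; rw [← hx, hy]
  | succ n ih =>
    rw [pIter_succ_iff] at hx hy
    obtain ⟨c, hc, hbc⟩ := hx
    obtain ⟨d, hd, hbd⟩ := hy
    cases hinj _ _ _ hbc hbd
    exact ih hc hd

omit hinj in
theorem pIter_mul_self {d : ℕ} {y : A} (h : y ∈ pIter f d y) (t : ℕ) :
    y ∈ pIter f (d * t) y := by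
  induction t with
  | zero => simp [pIter_zero_iff]
  | succ t ih =>
    rw [show d * (t+1) = d * t + d by ring]
    exact pIter_add.2 ⟨y, ih, h⟩

/-- If `y` is periodic and related to `a` then `a` is periodic. -/
theorem per_of_per_rel {d m : ℕ} {y a : A} (hy : y ∈ pIter f d y) (hd : 1 ≤ d)
    (hrel : a ∈ pIter f m y ∨ y ∈ pIter f m a) :
    ∃ s, 1 ≤ s ∧ a ∈ pIter f s a := by
  have hdt : m < d * (m + 1) := by nlinarith
  have hyt : y ∈ pIter f (d * (m+1)) y := pIter_mul_self hy (m+1)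
  rcases hrel with h | h
  · -- a ∈ pIter f m y : a = f^m(y)
    -- y ∈ pIter f (m + r) y with r = d*(m+1) - m... split as m + dt:
    have h1 : a ∈ pIter f (m + d * (m+1)) y := by
      rw [show m + d*(m+1) = d*(m+1) + m by omega]
      exact pIter_add.2 ⟨y, hyt, h⟩
    obtain ⟨c, hc, hac⟩ := pIter_add.1 h1
    cases Part.mem_unique hc h
    exact ⟨d * (m+1), by omega, hac⟩
  · -- y ∈ pIter f m a
    obtain ⟨c, hc, hyc⟩ := pIter_add.1
      (show y ∈ pIter f ((d*(m+1) - m) + m) y by rw [show d*(m+1) - m + m = d*(m+1) by omega]; exact hyt)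
    have : c = a := pIter_back_inj hinj hyc h
    subst this
    exact ⟨m + (d*(m+1) - m), by omega, pIter_add.2 ⟨y, h, hc⟩⟩

/-- Distinctness along a chain through `w` related to `a`, when `a` is not periodic. -/
theorem chain_distinct {a w y : A} (hnp : ∀ s, 1 ≤ s → a ∉ pIter f s a)
    {m : ℕ} (hrel : a ∈ pIter f m w ∨ w ∈ pIter f m a)
    {i j : ℕ} (hij : i < j) (hy : y ∈ pIter f i w) (hz : y ∈ pIter f j w) : False := by
  obtain ⟨c, hc, hyc⟩ := pIter_add.1 (show y ∈ pIter f (i + (j - i)) w by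
    rw [show i + (j-i) = j by omega]; exact hz)
  cases Part.mem_unique hc hy
  -- y ∈ pIter f (j-i) y
  have hyper : y ∈ pIter f (j - i) y := hyc
  have hd : 1 ≤ j - i := by omega
  -- relate y to a
  have hrel' : ∃ m', a ∈ pIter f m' y ∨ y ∈ pIter f m' a := by
    rcases hrel with h | h
    · rcases le_or_gt i m with him | him
      · obtain ⟨c, hc, hac⟩ := pIter_add.1 (show a ∈ pIter f (i + (m - i)) w by
          rw [show i + (m-i) = m by omega]; exact h)
        cases Part.mem_unique hc hy
        exact ⟨m - i, Or.inl hac⟩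
      · obtain ⟨c, hc, hyc'⟩ := pIter_add.1 (show y ∈ pIter f (m + (i - m)) w by
          rw [show m + (i-m) = i by omega]; exact hy)
        cases Part.mem_unique hc h
        exact ⟨i - m, Or.inr hyc'⟩
    · exact ⟨m + i, Or.inr (pIter_add.2 ⟨w, h, hy⟩)⟩
  obtain ⟨m', hm'⟩ := hrel'
  obtain ⟨s, hs1, hs⟩ := per_of_per_rel hinj hyper hd hm'
  exact hnp s hs1 hs
end Lemmas
-- invariant lemmas (appended to base for testing)
section Inv
variable {A : Type*} {f : A →. A}

theorem cycle_inv {k : ℕ} {S : Set A} (h : IsKCycle f k S) :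
    S.Finite ∧ ∀ y ∈ S, (f y).Dom := by
  obtain ⟨hk, x, hxS, hxk, hdist, hS⟩ := h
  constructor
  · have : S ⊆ ⋃ i ∈ Finset.range k, {y | y ∈ pIter f i x} := by
      intro y hy
      rw [hS] at hy
      obtain ⟨i, hik, hyi⟩ := hy
      exact Set.mem_biUnion (Finset.mem_range.2 hik) hyi
    have hfin : (⋃ i ∈ Finset.range k, {y | y ∈ pIter f i x}).Finite :=
      Set.Finite.biUnion (Finset.range k).finite_toSet
        (fun i _ => Set.Subsingleton.finite (fun u hu v hv => Part.mem_unique hu hv))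
    exact hfin.subset this
  · intro y hy
    rw [hS] at hy
    obtain ⟨i, hik, hyi⟩ := hy
    obtain ⟨c, hc, -⟩ := pIter_add.1 (show x ∈ pIter f ((i+1) + (k - (i+1))) x by
      rw [show (i+1) + (k - (i+1)) = k by omega]; exact hxk)
    obtain ⟨d, hd, hcd⟩ := pIter_succ_iff.1 hc
    cases Part.mem_unique hd hyi
    exact Part.dom_iff_mem.2 ⟨c, hcd⟩

theorem chain_inv {k : ℕ} {S : Set A} (h : IsKChain f k S) :
    S.Finite ∧ ∃ y ∈ S, ¬(f y).Dom := by
  obtain ⟨hk, x, hxinj, hS, h0, hsucc, hlast⟩ := h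
  refine ⟨hS ▸ Set.finite_range x, x ⟨k-1, by omega⟩, ?_, hlast hk⟩
  rw [hS]; exact Set.mem_range_self _

theorem Z_inv {S : Set A} (h : IsZChain f S) :
    S.Infinite ∧ (∀ y ∈ S, (f y).Dom) ∧ ∀ y ∈ S, y ∈ pRan f := by
  obtain ⟨hinf, e, heinj, hrange, hsucc⟩ := h
  refine ⟨hinf, ?_, ?_⟩
  · intro y hy
    obtain ⟨z, rfl⟩ := hrange ▸ hy
    exact Part.dom_iff_mem.2 ⟨e (z+1), hsucc z⟩
  · intro y hy
    obtain ⟨z, rfl⟩ := hrange ▸ hy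
    exact ⟨e (z-1), by have := hsucc (z-1); rwa [sub_add_cancel] at this⟩

theorem omega_inv {S : Set A} (h : IsOmegaChain f S) :
    S.Infinite ∧ (∀ y ∈ S, (f y).Dom) ∧ ∃ y ∈ S, y ∉ pRan f := by
  obtain ⟨u, huinj, hS, h0, hsucc⟩ := h
  refine ⟨hS ▸ Set.infinite_range_of_injective huinj, ?_, u 0, ?_, h0⟩
  · intro y hy
    obtain ⟨n, rfl⟩ := hS ▸ hy
    exact Part.dom_iff_mem.2 ⟨u (n+1), hsucc n⟩
  · rw [hS]; exact Set.mem_range_self _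

theorem omegaStar_inv {S : Set A} (h : IsOmegaStarChain f S) :
    S.Infinite ∧ (∃ y ∈ S, ¬(f y).Dom) ∧ ∀ y ∈ S, y ∈ pRan f := by
  obtain ⟨u, huinj, hS, h0, hsucc⟩ := h
  refine ⟨hS ▸ Set.infinite_range_of_injective huinj, ⟨u 0, ?_, h0⟩, ?_⟩
  · rw [hS]; exact Set.mem_range_self _
  · intro y hy
    obtain ⟨n, rfl⟩ := hS ▸ hy
    exact ⟨u (n+1), hsucc n⟩

end Inv
section Cases
variable {A : Type*} {f : A →. A}

theorem mem_orbit_rel {a c y : A} {m j : ℕ} (hc : a ∈ pIter f m c) (hy : y ∈ pIter f j c) :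
    y ∈ pOrbit f a := by
  rcases le_or_gt j m with h | h
  · obtain ⟨d, hd, had⟩ := pIter_add.1 (show a ∈ pIter f (j + (m-j)) c by
      rw [show j+(m-j)=m by omega]; exact hc)
    cases Part.mem_unique hd hy
    exact ⟨m - j, Or.inr had⟩
  · obtain ⟨d, hd, hyd⟩ := pIter_add.1 (show y ∈ pIter f (m + (j-m)) c by
      rw [show m+(j-m)=j by omega]; exact hy)
    cases Part.mem_unique hd hc
    exact ⟨j - m, Or.inl hyd⟩

variable (hinj : ∀ x y z : A, z ∈ f x → z ∈ f y → x = y)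
include hinj

omit hinj in
theorem forward_reduce {a b : A} {k n : ℕ} (hak : a ∈ pIter f k a) (_hk : 1 ≤ k)
    (hb : b ∈ pIter f n a) : b ∈ pIter f (n % k) a := by
  have hmul := pIter_mul_self hak (n / k)
  rw [← Nat.div_add_mod n k] at hb
  obtain ⟨c, hc, hbc⟩ := pIter_add.1 hb
  cases Part.mem_unique hc hmul
  exact hbc

theorem cycle_case (a : A) (hper : ∃ k, 1 ≤ k ∧ a ∈ pIter f k a) :
    ∃ k, IsKCycle f k (pOrbit f a) := by
  classical
  set k := Nat.find hper with hkdef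
  obtain ⟨hk1, hak⟩ := Nat.find_spec hper
  refine ⟨k, hk1, a, ⟨0, Or.inl (pIter_zero_iff.2 rfl)⟩, hak, ?_, ?_⟩
  · rintro i j hij hjk y z hy hz rfl
    obtain ⟨c, hc, hyc⟩ := pIter_add.1 (show y ∈ pIter f (i + (j-i)) a by
      rw [show i + (j-i) = j by omega]; exact hz)
    cases Part.mem_unique hc hy
    obtain ⟨c2, hc2, hac2⟩ := pIter_add.1 (show a ∈ pIter f (i + (k-i)) a by
      rw [show i + (k-i) = k by omega]; exact hak)
    cases Part.mem_unique hc2 hy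
    have h1 : a ∈ pIter f (i + ((j-i) + (k-i))) a :=
      pIter_add.2 ⟨y, hy, pIter_add.2 ⟨y, hyc, hac2⟩⟩
    rw [show i + ((j-i)+(k-i)) = (j-i) + k by omega] at h1
    obtain ⟨c3, hc3, hac3⟩ := pIter_add.1 h1
    have : c3 = a := pIter_back_inj hinj hac3 hak
    subst this
    exact Nat.find_min hper (show j - i < k by omega) ⟨by omega, hc3⟩
  · ext b
    simp only [pOrbit, Set.mem_setOf_eq]
    constructor
    · rintro ⟨n, hb | hb⟩
      · exact ⟨n % k, Nat.mod_lt _ (by omega), forward_reduce hak hk1 hb⟩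
      · obtain ⟨c, hc, hac⟩ := pIter_add.1 (show a ∈ pIter f ((k*(n+1) - n) + n) a by
          have hle : n + 1 ≤ k * (n+1) := Nat.le_mul_of_pos_left _ hk1
          rw [show (k*(n+1) - n) + n = k*(n+1) by omega]
          exact pIter_mul_self hak (n+1))
        have : c = b := pIter_back_inj hinj hac hb
        subst this
        exact ⟨(k*(n+1) - n) % k, Nat.mod_lt _ (by omega), forward_reduce hak hk1 hc⟩
    · rintro ⟨i, hik, hbi⟩; exact ⟨i, Or.inl hbi⟩

end Cases
section Chain
variable {A : Type*} {f : A →. A}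
variable (hinj : ∀ x y z : A, z ∈ f x → z ∈ f y → x = y)
include hinj

theorem chain_case (a : A) (hnp : ∀ s, 1 ≤ s → a ∉ pIter f s a)
    (hF : ¬ ∀ n, ∃ b, b ∈ pIter f n a) (hB : ¬ ∀ n, ∃ b, a ∈ pIter f n b) :
    ∃ k, IsKChain f k (pOrbit f a) := by
  classical
  have hF' : ∃ n, ¬ ∃ b, b ∈ pIter f n a := not_forall.1 hF
  have hB' : ∃ n, ¬ ∃ b, a ∈ pIter f n b := not_forall.1 hB
  set N := Nat.find hF' with hNdef
  set M := Nat.find hB' with hMdef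
  have hNspec : ¬ ∃ b, b ∈ pIter f N a := Nat.find_spec hF'
  have hMspec : ¬ ∃ b, a ∈ pIter f M b := Nat.find_spec hB'
  have hNmin : ∀ n < N, ∃ b, b ∈ pIter f n a := fun n hn =>
    not_not.1 (Nat.find_min hF' hn)
  have hMmin : ∀ n < M, ∃ b, a ∈ pIter f n b := fun n hn =>
    not_not.1 (Nat.find_min hB' hn)
  have hN1 : 1 ≤ N := by
    rcases Nat.eq_zero_or_pos N with h | h
    · exact absurd ⟨a, by rw [h]; exact pIter_zero_iff.2 rfl⟩ hNspec
    · exact h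
  have hM1 : 1 ≤ M := by
    rcases Nat.eq_zero_or_pos M with h | h
    · exact absurd ⟨a, by rw [h]; exact pIter_zero_iff.2 rfl⟩ hMspec
    · exact h
  obtain ⟨c, hc⟩ : ∃ c, a ∈ pIter f (M-1) c := hMmin (M-1) (by omega)
  -- forward/backward bounds
  have hFb : ∀ n b, b ∈ pIter f n a → n < N := by
    intro n b hb
    by_contra h
    obtain ⟨d, hd, -⟩ := pIter_add.1 (show b ∈ pIter f (N + (n - N)) a by
      rw [show N + (n-N) = n by omega]; exact hb)
    exact hNspec ⟨d, hd⟩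
  have hBb : ∀ n b, a ∈ pIter f n b → n < M := by
    intro n b hb
    by_contra h
    obtain ⟨d, hd, had⟩ := pIter_add.1 (show a ∈ pIter f ((n - M) + M) b by
      rw [show (n-M) + M = n by omega]; exact hb)
    exact hMspec ⟨d, had⟩
  set k := (M - 1) + N with hkdef
  have hk1 : 1 ≤ k := by omega
  have hdom : ∀ j, j < k → ∃ y, y ∈ pIter f j c := by
    intro j hj
    rcases le_or_gt j (M-1) with h | h
    · obtain ⟨d, hd, -⟩ := pIter_add.1 (show a ∈ pIter f (j + ((M-1) - j)) c by
        rw [show j + ((M-1)-j) = M-1 by omega]; exact hc)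
      exact ⟨d, hd⟩
    · obtain ⟨b, hb⟩ := hNmin (j - (M-1)) (by omega)
      exact ⟨b, by rw [show j = (M-1) + (j - (M-1)) by omega]
                   exact pIter_add.2 ⟨a, hc, hb⟩⟩
  obtain ⟨x, hx⟩ : ∃ x : Fin k → A, ∀ j : Fin k, x j ∈ pIter f j.val c :=
    ⟨fun j => Classical.choose (hdom j.val j.2),
     fun j => Classical.choose_spec (hdom j.val j.2)⟩
  refine ⟨k, hk1, x, ?_, ?_, ?_, ?_, ?_⟩
  · -- injective
    have key : ∀ i j : Fin k, i.val < j.val → x i = x j → False := by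
      intro i j hij heq
      exact chain_distinct hinj hnp (Or.inl hc) hij (hx i) (heq ▸ hx j)
    intro i j heq
    rcases lt_trichotomy i.val j.val with h | h | h
    · exact (key i j h heq).elim
    · exact Fin.ext h
    · exact (key j i h heq.symm).elim
  · -- range
    ext b
    simp only [pOrbit, Set.mem_setOf_eq, Set.mem_range]
    constructor
    · rintro ⟨n, hb | hb⟩
      · have hn : n < N := hFb n b hb
        exact ⟨⟨(M-1) + n, by omega⟩,
          Part.mem_unique (hx ⟨(M-1)+n, by omega⟩) (pIter_add.2 ⟨a, hc, hb⟩)⟩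
      · have hn : n < M := hBb n b hb
        refine ⟨⟨(M-1) - n, by omega⟩, ?_⟩
        show x _ = b
        obtain ⟨d, hd, had⟩ := pIter_add.1 (show a ∈ pIter f (((M-1) - n) + n) c by
          rw [show ((M-1)-n) + n = M-1 by omega]; exact hc)
        cases Part.mem_unique hd (hx ⟨(M-1)-n, by omega⟩)
        exact pIter_back_inj hinj had hb
    · rintro ⟨j, rfl⟩
      exact mem_orbit_rel hc (hx j)
  · -- first not in range
    intro hk0
    have h0 : x ⟨0, hk0⟩ = c := pIter_zero_iff.1 (hx ⟨0, hk0⟩)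
    rintro ⟨w, hw⟩
    rw [h0] at hw
    refine hMspec ⟨w, ?_⟩
    rw [show M = 1 + (M-1) by omega]
    exact pIter_add.2 ⟨c, pIter_one_iff.2 hw, hc⟩
  · -- successor
    intro i h
    obtain ⟨d, hd, hfd⟩ := pIter_succ_iff.1 (hx ⟨i.val + 1, h⟩)
    cases Part.mem_unique hd (hx i)
    exact hfd
  · -- last not in dom
    intro hk0 hDom
    obtain ⟨z, hz⟩ := Part.dom_iff_mem.1 hDom
    have hzk : z ∈ pIter f k c := by
      rw [show k = (k-1) + 1 by omega]
      exact pIter_succ_iff.2 ⟨_, hx ⟨k-1, by omega⟩, hz⟩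
    obtain ⟨d, hd, hzd⟩ := pIter_add.1 (show z ∈ pIter f ((M-1) + N) c from hzk)
    cases Part.mem_unique hd hc
    exact hNspec ⟨z, hzd⟩

end Chain
section OmegaCase
variable {A : Type*} {f : A →. A}
variable (hinj : ∀ x y z : A, z ∈ f x → z ∈ f y → x = y)
include hinj

theorem omega_case (a : A) (hnp : ∀ s, 1 ≤ s → a ∉ pIter f s a)
    (hF : ∀ n, ∃ b, b ∈ pIter f n a) (hB : ¬ ∀ n, ∃ b, a ∈ pIter f n b) :
    IsOmegaChain f (pOrbit f a) := by
  classical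
  have hB' : ∃ n, ¬ ∃ b, a ∈ pIter f n b := not_forall.1 hB
  set M := Nat.find hB' with hMdef
  have hMspec : ¬ ∃ b, a ∈ pIter f M b := Nat.find_spec hB'
  have hMmin : ∀ n < M, ∃ b, a ∈ pIter f n b := fun n hn =>
    not_not.1 (Nat.find_min hB' hn)
  have hM1 : 1 ≤ M := by
    rcases Nat.eq_zero_or_pos M with h | h
    · exact absurd ⟨a, by rw [h]; exact pIter_zero_iff.2 rfl⟩ hMspec
    · exact h
  obtain ⟨c, hc⟩ : ∃ c, a ∈ pIter f (M-1) c := hMmin (M-1) (by omega)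
  have hBb : ∀ n b, a ∈ pIter f n b → n < M := by
    intro n b hb
    by_contra h
    obtain ⟨d, hd, had⟩ := pIter_add.1 (show a ∈ pIter f ((n - M) + M) b by
      rw [show (n-M) + M = n by omega]; exact hb)
    exact hMspec ⟨d, had⟩
  have hdom : ∀ j : ℕ, ∃ y, y ∈ pIter f j c := by
    intro j
    rcases le_or_gt j (M-1) with h | h
    · obtain ⟨d, hd, -⟩ := pIter_add.1 (show a ∈ pIter f (j + ((M-1) - j)) c by
        rw [show j + ((M-1)-j) = M-1 by omega]; exact hc)
      exact ⟨d, hd⟩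
    · obtain ⟨b, hb⟩ := hF (j - (M-1))
      exact ⟨b, by rw [show j = (M-1) + (j - (M-1)) by omega]
                   exact pIter_add.2 ⟨a, hc, hb⟩⟩
  obtain ⟨u, hu⟩ : ∃ u : ℕ → A, ∀ j, u j ∈ pIter f j c :=
    ⟨fun j => Classical.choose (hdom j), fun j => Classical.choose_spec (hdom j)⟩
  refine ⟨u, ?_, ?_, ?_, ?_⟩
  · -- injective
    have key : ∀ i j : ℕ, i < j → u i = u j → False := by
      intro i j hij heq
      exact chain_distinct hinj hnp (Or.inl hc) hij (hu i) (heq ▸ hu j)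
    intro i j heq
    rcases lt_trichotomy i j with h | h | h
    · exact (key i j h heq).elim
    · exact h
    · exact (key j i h heq.symm).elim
  · -- range
    ext b
    simp only [pOrbit, Set.mem_setOf_eq, Set.mem_range]
    constructor
    · rintro ⟨n, hb | hb⟩
      · exact ⟨(M-1) + n,
          Part.mem_unique (hu ((M-1)+n)) (pIter_add.2 ⟨a, hc, hb⟩)⟩
      · have hn : n < M := hBb n b hb
        refine ⟨(M-1) - n, ?_⟩
        obtain ⟨d, hd, had⟩ := pIter_add.1 (show a ∈ pIter f (((M-1) - n) + n) c by
          rw [show ((M-1)-n) + n = M-1 by omega]; exact hc)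
        cases Part.mem_unique hd (hu ((M-1)-n))
        exact pIter_back_inj hinj had hb
    · rintro ⟨j, rfl⟩
      exact mem_orbit_rel hc (hu j)
  · -- u 0 not in range
    have h0 : u 0 = c := pIter_zero_iff.1 (hu 0)
    rintro ⟨w, hw⟩
    rw [h0] at hw
    refine hMspec ⟨w, ?_⟩
    rw [show M = 1 + (M-1) by omega]
    exact pIter_add.2 ⟨c, pIter_one_iff.2 hw, hc⟩
  · -- successor
    intro n
    obtain ⟨d, hd, hfd⟩ := pIter_succ_iff.1 (hu (n+1))
    cases Part.mem_unique hd (hu n)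
    exact hfd

end OmegaCase
section OmegaStarCase
variable {A : Type*} {f : A →. A}
variable (hinj : ∀ x y z : A, z ∈ f x → z ∈ f y → x = y)
include hinj

theorem omegaStar_case (a : A) (hnp : ∀ s, 1 ≤ s → a ∉ pIter f s a)
    (hF : ¬ ∀ n, ∃ b, b ∈ pIter f n a) (hB : ∀ n, ∃ b, a ∈ pIter f n b) :
    IsOmegaStarChain f (pOrbit f a) := by
  classical
  have hF' : ∃ n, ¬ ∃ b, b ∈ pIter f n a := not_forall.1 hF
  set N := Nat.find hF' with hNdef
  have hNspec : ¬ ∃ b, b ∈ pIter f N a := Nat.find_spec hF'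
  have hNmin : ∀ n < N, ∃ b, b ∈ pIter f n a := fun n hn =>
    not_not.1 (Nat.find_min hF' hn)
  have hN1 : 1 ≤ N := by
    rcases Nat.eq_zero_or_pos N with h | h
    · exact absurd ⟨a, by rw [h]; exact pIter_zero_iff.2 rfl⟩ hNspec
    · exact h
  obtain ⟨t, ht⟩ : ∃ t, t ∈ pIter f (N-1) a := hNmin (N-1) (by omega)
  have hFb : ∀ n b, b ∈ pIter f n a → n < N := by
    intro n b hb
    by_contra h
    obtain ⟨d, hd, -⟩ := pIter_add.1 (show b ∈ pIter f (N + (n - N)) a by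
      rw [show N + (n-N) = n by omega]; exact hb)
    exact hNspec ⟨d, hd⟩
  have hdom : ∀ n : ℕ, ∃ y, t ∈ pIter f n y := by
    intro n
    rcases le_or_gt n (N-1) with h | h
    · obtain ⟨d, hd, htd⟩ := pIter_add.1 (show t ∈ pIter f (((N-1) - n) + n) a by
        rw [show ((N-1)-n) + n = N-1 by omega]; exact ht)
      exact ⟨d, htd⟩
    · obtain ⟨b, hb⟩ := hB (n - (N-1))
      exact ⟨b, by rw [show n = (n - (N-1)) + (N-1) by omega]
                   exact pIter_add.2 ⟨a, hb, ht⟩⟩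
  obtain ⟨u, hu⟩ : ∃ u : ℕ → A, ∀ j, t ∈ pIter f j (u j) :=
    ⟨fun j => Classical.choose (hdom j), fun j => Classical.choose_spec (hdom j)⟩
  have hrel : ∀ j, a ∈ pIter f (j - (N-1)) (u j) ∨ u j ∈ pIter f ((N-1) - j) a := by
    intro j
    rcases le_or_gt (N-1) j with h | h
    · obtain ⟨d, hd, htd⟩ := pIter_add.1 (show t ∈ pIter f ((j - (N-1)) + (N-1)) (u j) by
        rw [show (j - (N-1)) + (N-1) = j by omega]; exact hu j)
      cases pIter_back_inj hinj htd ht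
      exact Or.inl hd
    · obtain ⟨d, hd, htd⟩ := pIter_add.1 (show t ∈ pIter f (((N-1) - j) + j) a by
        rw [show ((N-1)-j) + j = N-1 by omega]; exact ht)
      cases pIter_back_inj hinj htd (hu j)
      exact Or.inr hd
  refine ⟨u, ?_, ?_, ?_, ?_⟩
  · -- injective
    have key : ∀ i j : ℕ, i < j → u i = u j → False := by
      intro i j hij heq
      have hj' : t ∈ pIter f j (u i) := by rw [heq]; exact hu j
      rcases hrel i with h | h
      · exact chain_distinct hinj hnp (Or.inl h) hij (hu i) hj'
      · exact chain_distinct hinj hnp (Or.inr h) hij (hu i) hj'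
    intro i j heq
    rcases lt_trichotomy i j with h | h | h
    · exact (key i j h heq).elim
    · exact h
    · exact (key j i h heq.symm).elim
  · -- range
    ext b
    simp only [pOrbit, Set.mem_setOf_eq, Set.mem_range]
    constructor
    · rintro ⟨n, hb | hb⟩
      · have hn : n < N := hFb n b hb
        refine ⟨(N-1) - n, ?_⟩
        obtain ⟨d, hd, htd⟩ := pIter_add.1 (show t ∈ pIter f (n + ((N-1) - n)) a by
          rw [show n + ((N-1)-n) = N-1 by omega]; exact ht)
        cases Part.mem_unique hd hb
        exact pIter_back_inj hinj (hu ((N-1)-n)) htd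
      · refine ⟨(N-1) + n, ?_⟩
        have htb : t ∈ pIter f ((N-1) + n) b := by
          rw [show (N-1) + n = n + (N-1) by omega]
          exact pIter_add.2 ⟨a, hb, ht⟩
        exact pIter_back_inj hinj (hu ((N-1)+n)) htb
    · rintro ⟨j, rfl⟩
      rcases hrel j with h | h
      · exact ⟨j - (N-1), Or.inr h⟩
      · exact ⟨(N-1) - j, Or.inl h⟩
  · -- not in dom
    have h0 : u 0 = t := (pIter_zero_iff.1 (hu 0)).symm
    intro hDom
    obtain ⟨z, hz⟩ := Part.dom_iff_mem.1 hDom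
    rw [h0] at hz
    refine hNspec ⟨z, ?_⟩
    rw [show N = (N-1) + 1 by omega]
    exact pIter_succ_iff.2 ⟨t, ht, hz⟩
  · -- predecessor
    intro n
    obtain ⟨d, hd, htd⟩ := pIter_add.1 (show t ∈ pIter f (1 + n) (u (n+1)) by
      rw [show 1 + n = n + 1 by omega]; exact hu (n+1))
    cases pIter_back_inj hinj htd (hu n)
    exact pIter_one_iff.1 hd

end OmegaStarCase
section ZCase
variable {A : Type*} {f : A →. A}
variable (hinj : ∀ x y z : A, z ∈ f x → z ∈ f y → x = y)
include hinj

theorem Z_case (a : A) (hnp : ∀ s, 1 ≤ s → a ∉ pIter f s a)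
    (hF : ∀ n, ∃ b, b ∈ pIter f n a) (hB : ∀ n, ∃ b, a ∈ pIter f n b) :
    IsZChain f (pOrbit f a) := by
  classical
  have hz : ∀ z : ℤ, ∃ y, (0 ≤ z → y ∈ pIter f z.toNat a) ∧
      (z < 0 → a ∈ pIter f (-z).toNat y) := by
    intro z
    rcases le_or_gt 0 z with h | h
    · obtain ⟨y, hy⟩ := hF z.toNat
      exact ⟨y, fun _ => hy, fun h' => absurd h (not_le.2 h')⟩
    · obtain ⟨y, hy⟩ := hB (-z).toNat
      exact ⟨y, fun h' => absurd h (not_lt.2 h'), fun _ => hy⟩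
  choose e he using hz
  have hpos : ∀ z : ℤ, 0 ≤ z → e z ∈ pIter f z.toNat a := fun z h => (he z).1 h
  have hneg : ∀ z : ℤ, z < 0 → a ∈ pIter f (-z).toNat (e z) := fun z h => (he z).2 h
  have heinj : Function.Injective e := by
    have key : ∀ y z : ℤ, y < z → e y = e z → False := by
      intro y z hyz heq
      rcases le_or_gt 0 y with hy0 | hy0
      · -- 0 ≤ y < z
        have h1 := hpos y hy0
        have h2 : e y ∈ pIter f z.toNat a := by rw [heq]; exact hpos z (by omega)
        exact chain_distinct hinj hnp (Or.inl (pIter_zero_iff.2 rfl))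
          (show y.toNat < z.toNat by omega) h1 h2
      · rcases le_or_gt 0 z with hz0 | hz0
        · -- y < 0 ≤ z
          have h1 := hneg y hy0
          have h2 := hpos z hz0
          rw [heq] at h1
          refine hnp (z.toNat + (-y).toNat) (by omega) ?_
          exact pIter_add.2 ⟨e z, h2, h1⟩
        · -- y < z < 0
          have h1 := hneg y hy0
          have h2 := hneg z hz0
          rw [heq] at h1
          obtain ⟨d, hd, had⟩ := pIter_add.1
            (show a ∈ pIter f (((-y).toNat - (-z).toNat) + (-z).toNat) (e z) by
              rw [show ((-y).toNat - (-z).toNat) + (-z).toNat = (-y).toNat by omega]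
              exact h1)
          cases pIter_back_inj hinj had h2
          obtain ⟨s, hs1, hs⟩ := per_of_per_rel hinj hd
            (show 1 ≤ (-y).toNat - (-z).toNat by omega) (Or.inl h2)
          exact hnp s hs1 hs
    intro y z heq
    rcases lt_trichotomy y z with h | h | h
    · exact (key y z h heq).elim
    · exact h
    · exact (key z y h heq.symm).elim
  have hrange : Set.range e = pOrbit f a := by
    ext b
    simp only [Set.mem_range, pOrbit, Set.mem_setOf_eq]
    constructor
    · rintro ⟨z, rfl⟩
      rcases le_or_gt 0 z with h | h
      · exact ⟨z.toNat, Or.inl (hpos z h)⟩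
      · exact ⟨(-z).toNat, Or.inr (hneg z h)⟩
    · rintro ⟨n, hb | hb⟩
      · refine ⟨(n : ℤ), ?_⟩
        have := hpos (n : ℤ) (by omega)
        rw [show ((n:ℤ)).toNat = n by omega] at this
        exact Part.mem_unique this hb
      · rcases Nat.eq_zero_or_pos n with h | h
        · refine ⟨0, ?_⟩
          have h0 : e 0 = a := pIter_zero_iff.1 (by simpa using hpos 0 le_rfl)
          rw [h0]
          rw [h] at hb
          exact pIter_zero_iff.1 hb
        · refine ⟨-(n : ℤ), ?_⟩
          have := hneg (-(n:ℤ)) (by omega)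
          rw [show (-(-(n:ℤ))).toNat = n by omega] at this
          exact pIter_back_inj hinj this hb
  refine ⟨?_, e, heinj, hrange, ?_⟩
  · rw [← hrange]
    exact Set.infinite_range_of_injective heinj
  · intro z
    rcases le_or_gt 0 z with h | h
    · have h1 := hpos (z+1) (by omega)
      rw [show (z+1).toNat = z.toNat + 1 by omega] at h1
      obtain ⟨d, hd, hfd⟩ := pIter_succ_iff.1 h1
      cases Part.mem_unique hd (hpos z h)
      exact hfd
    · rcases eq_or_lt_of_le (show z ≤ -1 by omega) with h1 | h1
      · -- z = -1
        subst h1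
        have h0 : e 0 = a := pIter_zero_iff.1 (by simpa using hpos 0 le_rfl)
        have hm := hneg (-1) (by omega)
        rw [show ((-(-1:ℤ))).toNat = 1 by omega] at hm
        rw [show (-1 + 1 : ℤ) = 0 by omega, h0]
        exact pIter_one_iff.1 hm
      · -- z < -1
        have hm := hneg z h
        obtain ⟨d, hd, had⟩ := pIter_add.1
          (show a ∈ pIter f (1 + ((-z).toNat - 1)) (e z) by
            rw [show 1 + ((-z).toNat - 1) = (-z).toNat by omega]
            exact hm)
        have hm' := hneg (z+1) (by omega)
        rw [show (-(z+1)).toNat = (-z).toNat - 1 by omega] at hm'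
        cases pIter_back_inj hinj had hm'
        exact pIter_one_iff.1 hd
end ZCase
theorem partial_injection_orbit_classification {A : Type*} (f : A →. A)
    (hinj : ∀ x y z : A, z ∈ f x → z ∈ f y → x = y) (a : A) :
    ∃! i : Fin 5,
      ![∃ k, IsKCycle f k (pOrbit f a),
        ∃ k, IsKChain f k (pOrbit f a),
        IsZChain f (pOrbit f a),
        IsOmegaChain f (pOrbit f a),
        IsOmegaStarChain f (pOrbit f a)] i := by
  classical
  by_cases hper : ∃ k, 1 ≤ k ∧ a ∈ pIter f k a
  · obtain ⟨k0, hc0⟩ := cycle_case hinj a hper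
    obtain ⟨hfin, hdomAll⟩ := cycle_inv hc0
    refine ⟨0, ⟨k0, hc0⟩, ?_⟩
    intro j hj
    fin_cases j
    · rfl
    · exfalso
      obtain ⟨k, hk⟩ : ∃ k, IsKChain f k (pOrbit f a) := hj
      obtain ⟨-, y, hyS, hyD⟩ := chain_inv hk
      exact hyD (hdomAll y hyS)
    · exact absurd hfin ((Z_inv hj).1)
    · exact absurd hfin ((omega_inv hj).1)
    · exact absurd hfin ((omegaStar_inv hj).1)
  · have hnp : ∀ s, 1 ≤ s → a ∉ pIter f s a := by
      intro s hs h; exact hper ⟨s, hs, h⟩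
    by_cases hF : ∀ n, ∃ b, b ∈ pIter f n a
    · by_cases hB : ∀ n, ∃ b, a ∈ pIter f n b
      · -- Z-chain
        have hZ := Z_case hinj a hnp hF hB
        obtain ⟨hinf, hdomAll, hranAll⟩ := Z_inv hZ
        refine ⟨2, hZ, ?_⟩
        intro j hj
        fin_cases j
        · exfalso
          obtain ⟨k, hk⟩ : ∃ k, IsKCycle f k (pOrbit f a) := hj
          exact hinf (cycle_inv hk).1
        · exfalso
          obtain ⟨k, hk⟩ : ∃ k, IsKChain f k (pOrbit f a) := hj
          exact hinf (chain_inv hk).1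
        · rfl
        · exfalso
          obtain ⟨-, -, y, hyS, hyR⟩ := omega_inv hj
          exact hyR (hranAll y hyS)
        · exfalso
          obtain ⟨-, ⟨y, hyS, hyD⟩, -⟩ := omegaStar_inv hj
          exact hyD (hdomAll y hyS)
      · -- ω-chain
        have hO := omega_case hinj a hnp hF hB
        obtain ⟨hinf, hdomAll, y0, hy0S, hy0R⟩ := omega_inv hO
        refine ⟨3, hO, ?_⟩
        intro j hj
        fin_cases j
        · exfalso
          obtain ⟨k, hk⟩ : ∃ k, IsKCycle f k (pOrbit f a) := hj
          exact hinf (cycle_inv hk).1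
        · exfalso
          obtain ⟨k, hk⟩ : ∃ k, IsKChain f k (pOrbit f a) := hj
          exact hinf (chain_inv hk).1
        · exact absurd ((Z_inv hj).2.2 y0 hy0S) hy0R
        · rfl
        · exact absurd ((omegaStar_inv hj).2.2 y0 hy0S) hy0R
    · by_cases hB : ∀ n, ∃ b, a ∈ pIter f n b
      · -- ω*-chain
        have hO := omegaStar_case hinj a hnp hF hB
        obtain ⟨hinf, ⟨y0, hy0S, hy0D⟩, hranAll⟩ := omegaStar_inv hO
        refine ⟨4, hO, ?_⟩
        intro j hj
        fin_cases j
        · exfalso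
          obtain ⟨k, hk⟩ : ∃ k, IsKCycle f k (pOrbit f a) := hj
          exact hinf (cycle_inv hk).1
        · exfalso
          obtain ⟨k, hk⟩ : ∃ k, IsKChain f k (pOrbit f a) := hj
          exact hinf (chain_inv hk).1
        · exact absurd ((Z_inv hj).2.1 y0 hy0S) hy0D
        · exact absurd ((omega_inv hj).2.1 y0 hy0S) hy0D
        · rfl
      · -- finite chain
        obtain ⟨k1, hk1⟩ := chain_case hinj a hnp hF hB
        obtain ⟨hfin, y0, hy0S, hy0D⟩ := chain_inv hk1
        refine ⟨1, ⟨k1, hk1⟩, ?_⟩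
        intro j hj
        fin_cases j
        · exfalso
          obtain ⟨k, hk⟩ : ∃ k, IsKCycle f k (pOrbit f a) := hj
          exact hy0D ((cycle_inv hk).2 y0 hy0S)
        · rfl
        · exact absurd hfin ((Z_inv hj).1)
        · exact absurd hfin ((omega_inv hj).1)
        · exact absurd hfin ((omegaStar_inv hj).1)
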